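/- In Γ₃, the element a5⁴ is nontrivial, lies in Λ₃, and its normal closure in Λ₃ is a nontrivial proper normal subgroup of Λ₃ (it is neither the trivial subgroup nor all of Λ₃). In particular, Λ₃ is not simple. -/

import Mathlib

/- Generators: `Gen.a i` is the generator a(i+1), `Gen.b i` is b(i+1) of the paper. -/
inductive Gen : Type
  | a : Fin 5 → Gen
  | b : Fin 5 → Gen

/-- The letter aᵢ₊₁ viewed in the free group. -/
def ga (i : Fin 5) : FreeGroup Gen := FreeGroup.of (Gen.a i)

/-- The letter bᵢ₊₁ viewed in the free group. -/
def gb (i : Fin 5) : FreeGroup Gen := FreeGroup.of (Gen.b i)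

/-- The 25 relators. -/
def rels : Set (FreeGroup Gen) :=
  { ga 0 * gb 0 * (ga 1)⁻¹ * (gb 1)⁻¹,
    ga 0 * gb 1 * (ga 0)⁻¹ * (gb 0)⁻¹,
    ga 0 * gb 2 * (ga 1)⁻¹ * (gb 2)⁻¹,
    ga 0 * (gb 2)⁻¹ * (ga 1)⁻¹ * gb 1,
    ga 0 * (gb 0)⁻¹ * (ga 1)⁻¹ * gb 2,
    ga 1 * gb 1 * (ga 1)⁻¹ * (gb 0)⁻¹,
    ga 2 * gb 0 * (ga 3)⁻¹ * (gb 1)⁻¹,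
    ga 2 * gb 1 * (ga 2)⁻¹ * (gb 0)⁻¹,
    ga 2 * gb 2 * (ga 3)⁻¹ * (gb 2)⁻¹,
    ga 2 * (gb 2)⁻¹ * (ga 3)⁻¹ * gb 1,
    ga 2 * (gb 0)⁻¹ * (ga 3)⁻¹ * gb 2,
    ga 3 * gb 1 * (ga 3)⁻¹ * (gb 0)⁻¹,
    ga 0 * gb 3 * ga 0 * gb 4,
    ga 0 * (gb 4)⁻¹ * ga 1 * (gb 4)⁻¹,
    ga 0 * (gb 3)⁻¹ * (ga 3)⁻¹ * (gb 3)⁻¹,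
    ga 1 * gb 3 * ga 1 * gb 4,
    ga 1 * (gb 3)⁻¹ * (ga 2)⁻¹ * (gb 3)⁻¹,
    ga 2 * gb 4 * ga 3 * (gb 3)⁻¹,
    ga 2 * (gb 4)⁻¹ * (ga 4)⁻¹ * (gb 4)⁻¹,
    ga 2 * (gb 3)⁻¹ * ga 3 * gb 4,
    ga 3 * (gb 4)⁻¹ * ga 4 * (gb 4)⁻¹,
    ga 4 * gb 0 * ga 4 * gb 3,
    ga 4 * gb 1 * (ga 4)⁻¹ * gb 2,
    ga 4 * gb 2 * (ga 4)⁻¹ * gb 1,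
    ga 4 * (gb 3)⁻¹ * ga 4 * (gb 0)⁻¹ }

/-- The presented group. -/
abbrev G : Type := PresentedGroup rels

/-- The image of the generator aᵢ₊₁ in the presented group. -/
def γa (i : Fin 5) : G := PresentedGroup.of (Gen.a i)

/-- The image of the generator bᵢ₊₁ in the presented group. -/
def γb (i : Fin 5) : G := PresentedGroup.of (Gen.b i)

/-- Target values of the homomorphism: each aⱼ ↦ (1,0), each bⱼ ↦ (0,1). -/
def fgen : Gen → Multiplicative (ZMod 2 × ZMod 2)
  | .a _ => Multiplicative.ofAdd (1, 0)
  | .b _ => Multiplicative.ofAdd (0, 1)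

lemma fgen_rels : ∀ r ∈ rels, FreeGroup.lift fgen r = 1 := by
  intro r hr
  simp only [rels, Set.mem_insert_iff, Set.mem_singleton_iff] at hr
  rcases hr with rfl|rfl|rfl|rfl|rfl|rfl|rfl|rfl|rfl|rfl|rfl|rfl|rfl|rfl|rfl|rfl|rfl|rfl|rfl|rfl|rfl|rfl|rfl|rfl|rfl <;>
    simp only [ga, gb, map_mul, map_inv, FreeGroup.lift_apply_of] <;> decide

/-- The homomorphism φ. -/
def φ : G →* Multiplicative (ZMod 2 × ZMod 2) := PresentedGroup.toGroup fgen_rels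

/-- Λ is the kernel of φ. -/
def Λ : Subgroup G := φ.ker

/-- Letters: (index, sign). -/
abbrev L : Type := Fin 5 × Bool

def linv (x : L) : L := (x.1, !x.2)

@[simp] lemma linv_linv (x : L) : linv (linv x) = x := by simp [linv]

/-- Reduced words. -/
inductive Red : List L → Prop
  | nil : Red []
  | single (x : L) : Red [x]
  | cons {x y : L} {l : List L} (h : y ≠ linv x) (hr : Red (y :: l)) : Red (x :: y :: l)

/-- Reduced words: the vertex set of a tree on which the group acts. -/
def Wrd : Type := {w : List L // Red w}

/-- Left multiplication by a letter on reduced words. -/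
def lmul (b : L) : List L → List L
  | [] => [b]
  | c :: t => if c = linv b then t else b :: c :: t

lemma lmul_red (b : L) {w : List L} (hw : Red w) : Red (lmul b w) := by
  cases hw with
  | nil => exact Red.single b
  | single x =>
    by_cases h : x = linv b
    · simpa [lmul, h] using Red.nil
    · simpa [lmul, h] using Red.cons h (Red.single x)
  | @cons x y l h hr =>
    by_cases hx : x = linv b
    · simpa [lmul, hx] using hr
    · simpa [lmul, hx] using Red.cons hx (Red.cons h hr)

lemma lmul_invol (b : L) {w : List L} (hw : Red w) : lmul (linv b) (lmul b w) = w := by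
  cases hw with
  | nil => simp [lmul]
  | single x =>
    by_cases h : x = linv b
    · simp [lmul, h]
    · simp [lmul, h]
  | @cons x y l h hr =>
    by_cases hx : x = linv b
    · subst hx
      have hy : y ≠ b := by simpa using h
      simp [lmul, hy]
    · simp [lmul, hx]

/-- The left-multiplication permutation of reduced words. -/
def lmulEquiv (b : L) : Equiv.Perm Wrd where
  toFun w := ⟨lmul b w.1, lmul_red b w.2⟩
  invFun w := ⟨lmul (linv b) w.1, lmul_red (linv b) w.2⟩
  left_inv w := Subtype.ext (lmul_invol b w.2)
  right_inv w := Subtype.ext (by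
    show lmul b (lmul (linv b) w.1) = w.1
    have := lmul_invol (linv b) w.2
    rwa [linv_linv] at this)

lemma lmulEquiv_inv (b : L) : (lmulEquiv b)⁻¹ = lmulEquiv (linv b) :=
  Equiv.ext fun _ => rfl

section Core

variable (rule : L → L → L × L)

/-- The automaton action of a single letter-state on words. -/
def auto : L → List L → List L
  | _, [] => []
  | s, b :: w => (rule s b).1 :: auto (rule s b).2 w

variable (h1 : ∀ s b, rule (rule s b).2 (linv b) = (linv (rule s b).1, s))
variable (h2 : ∀ s b, rule (linv s) (rule s b).1 = (b, linv (rule s b).2))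

include h1 h2

lemma out_inj {s b c : L} (h : (rule s b).1 = (rule s c).1) : b = c := by
  have hb := h2 s b
  have hc := h2 s c
  rw [h, hc] at hb
  exact ((Prod.mk.injEq _ _ _ _).mp hb).1.symm

lemma auto_red (s : L) {w : List L} (hw : Red w) : Red (auto rule s w) := by
  induction hw generalizing s with
  | nil => exact Red.nil
  | single x => exact Red.single _
  | @cons x y l h hr ih =>
    refine Red.cons ?_ (ih (rule s x).2)
    intro hcon
    have heq : (rule (rule s x).2 y).1 = (rule (rule s x).2 (linv x)).1 := by
      rw [h1 s x, hcon]
    exact h (out_inj rule h1 h2 heq)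

lemma auto_invol (s : L) : ∀ w : List L, auto rule (linv s) (auto rule s w) = w
  | [] => rfl
  | b :: w => by
    show (rule (linv s) (rule s b).1).1 :: auto rule (rule (linv s) (rule s b).1).2 _ = _
    rw [h2 s b]
    exact congrArg (b :: ·) (auto_invol (rule s b).2 w)

lemma interchange (s b : L) : ∀ w : List L,
    auto rule s (lmul b w) = lmul (rule s b).1 (auto rule (rule s b).2 w)
  | [] => by simp [lmul, auto]
  | c :: t => by
    by_cases hc : c = linv b
    · subst hc
      rw [show lmul b (linv b :: t) = t from by simp [lmul]]
      show _ = lmul (rule s b).1 ((rule (rule s b).2 (linv b)).1 ::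
        auto rule (rule (rule s b).2 (linv b)).2 t)
      rw [h1 s b]
      simp [lmul]
    · rw [show lmul b (c :: t) = b :: c :: t from by simp [lmul, hc]]
      show (rule s b).1 :: auto rule (rule s b).2 (c :: t) = _
      show _ = lmul (rule s b).1 ((rule (rule s b).2 c).1 :: auto rule (rule (rule s b).2 c).2 t)
      have hne : (rule (rule s b).2 c).1 ≠ linv (rule s b).1 := by
        intro hcon
        have heq : (rule (rule s b).2 c).1 = (rule (rule s b).2 (linv b)).1 := by
          rw [h1 s b, hcon]
        exact hc (out_inj rule h1 h2 heq)
      rw [show lmul (rule s b).1 ((rule (rule s b).2 c).1 :: auto rule (rule (rule s b).2 c).2 t)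
        = (rule s b).1 :: (rule (rule s b).2 c).1 :: auto rule (rule (rule s b).2 c).2 t
        from by simp [lmul, hne]]
      rfl

/-- The automaton permutation of reduced words. -/
def autoEquiv (s : L) : Equiv.Perm Wrd where
  toFun w := ⟨auto rule s w.1, auto_red rule h1 h2 s w.2⟩
  invFun w := ⟨auto rule (linv s) w.1, auto_red rule h1 h2 (linv s) w.2⟩
  left_inv w := Subtype.ext (auto_invol rule h1 h2 s w.1)
  right_inv w := Subtype.ext (by
    show auto rule s (auto rule (linv s) w.1) = w.1
    have := auto_invol rule h1 h2 (linv s) w.1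
    rwa [linv_linv] at this)

lemma autoEquiv_inv (s : L) : (autoEquiv rule h1 h2 s)⁻¹ = autoEquiv rule h1 h2 (linv s) :=
  Equiv.ext fun _ => rfl

lemma relator_perm (a b c d : L) (hr : rule a b = (linv d, linv c)) :
    autoEquiv rule h1 h2 a * lmulEquiv b * autoEquiv rule h1 h2 c * lmulEquiv d = 1 := by
  refine Equiv.ext fun w => Subtype.ext ?_
  show auto rule a (lmul b (auto rule c (lmul d w.1))) = w.1
  rw [interchange rule h1 h2 a b, hr]
  show lmul (linv d) (auto rule (linv c) (auto rule c (lmul d w.1))) = w.1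
  rw [auto_invol rule h1 h2 c, lmul_invol d w.2]

lemma relator_perm' (a b c d : L) (hr : rule b c = (linv a, linv d)) :
    lmulEquiv a * autoEquiv rule h1 h2 b * lmulEquiv c * autoEquiv rule h1 h2 d = 1 := by
  refine Equiv.ext fun w => Subtype.ext ?_
  show lmul a (auto rule b (lmul c (auto rule d w.1))) = w.1
  rw [interchange rule h1 h2 b c, hr]
  show lmul a (lmul (linv a) (auto rule (linv d) (auto rule d w.1))) = w.1
  rw [auto_invol rule h1 h2 d]
  have := lmul_invol (linv a) w.2
  rwa [linv_linv] at this

end Core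

def ruleB : L → L → L × L := fun s b =>
  match s.1.val, s.2, b.1.val, b.2 with
  | 0, true, 0, true => (((1 : Fin 5), true), ((1 : Fin 5), true))
  | 0, true, 0, false => (((2 : Fin 5), false), ((1 : Fin 5), true))
  | 0, true, 1, true => (((0 : Fin 5), true), ((0 : Fin 5), true))
  | 0, true, 1, false => (((0 : Fin 5), false), ((0 : Fin 5), true))
  | 0, true, 2, true => (((2 : Fin 5), true), ((1 : Fin 5), true))
  | 0, true, 2, false => (((1 : Fin 5), false), ((1 : Fin 5), true))
  | 0, true, 3, true => (((4 : Fin 5), false), ((0 : Fin 5), false))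
  | 0, true, 3, false => (((3 : Fin 5), true), ((3 : Fin 5), true))
  | 0, true, 4, true => (((3 : Fin 5), false), ((0 : Fin 5), false))
  | 0, true, 4, false => (((4 : Fin 5), true), ((1 : Fin 5), false))
  | 0, false, 0, true => (((1 : Fin 5), true), ((0 : Fin 5), false))
  | 0, false, 0, false => (((1 : Fin 5), false), ((0 : Fin 5), false))
  | 0, false, 1, true => (((0 : Fin 5), true), ((1 : Fin 5), false))
  | 0, false, 1, false => (((2 : Fin 5), false), ((1 : Fin 5), false))
  | 0, false, 2, true => (((2 : Fin 5), true), ((1 : Fin 5), false))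
  | 0, false, 2, false => (((0 : Fin 5), false), ((1 : Fin 5), false))
  | 0, false, 3, true => (((3 : Fin 5), false), ((3 : Fin 5), false))
  | 0, false, 3, false => (((4 : Fin 5), true), ((0 : Fin 5), true))
  | 0, false, 4, true => (((4 : Fin 5), false), ((1 : Fin 5), true))
  | 0, false, 4, false => (((3 : Fin 5), true), ((0 : Fin 5), true))
  | 1, true, 0, true => (((2 : Fin 5), true), ((0 : Fin 5), true))
  | 1, true, 0, false => (((1 : Fin 5), false), ((0 : Fin 5), true))
  | 1, true, 1, true => (((0 : Fin 5), true), ((1 : Fin 5), true))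
  | 1, true, 1, false => (((0 : Fin 5), false), ((1 : Fin 5), true))
  | 1, true, 2, true => (((1 : Fin 5), true), ((0 : Fin 5), true))
  | 1, true, 2, false => (((2 : Fin 5), false), ((0 : Fin 5), true))
  | 1, true, 3, true => (((4 : Fin 5), false), ((1 : Fin 5), false))
  | 1, true, 3, false => (((3 : Fin 5), true), ((2 : Fin 5), true))
  | 1, true, 4, true => (((3 : Fin 5), false), ((1 : Fin 5), false))
  | 1, true, 4, false => (((4 : Fin 5), true), ((0 : Fin 5), false))
  | 1, false, 0, true => (((1 : Fin 5), true), ((1 : Fin 5), false))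
  | 1, false, 0, false => (((1 : Fin 5), false), ((1 : Fin 5), false))
  | 1, false, 1, true => (((2 : Fin 5), true), ((0 : Fin 5), false))
  | 1, false, 1, false => (((0 : Fin 5), false), ((0 : Fin 5), false))
  | 1, false, 2, true => (((0 : Fin 5), true), ((0 : Fin 5), false))
  | 1, false, 2, false => (((2 : Fin 5), false), ((0 : Fin 5), false))
  | 1, false, 3, true => (((3 : Fin 5), false), ((2 : Fin 5), false))
  | 1, false, 3, false => (((4 : Fin 5), true), ((1 : Fin 5), true))
  | 1, false, 4, true => (((4 : Fin 5), false), ((0 : Fin 5), true))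
  | 1, false, 4, false => (((3 : Fin 5), true), ((1 : Fin 5), true))
  | 2, true, 0, true => (((1 : Fin 5), true), ((3 : Fin 5), true))
  | 2, true, 0, false => (((2 : Fin 5), false), ((3 : Fin 5), true))
  | 2, true, 1, true => (((0 : Fin 5), true), ((2 : Fin 5), true))
  | 2, true, 1, false => (((0 : Fin 5), false), ((2 : Fin 5), true))
  | 2, true, 2, true => (((2 : Fin 5), true), ((3 : Fin 5), true))
  | 2, true, 2, false => (((1 : Fin 5), false), ((3 : Fin 5), true))
  | 2, true, 3, true => (((3 : Fin 5), false), ((1 : Fin 5), true))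
  | 2, true, 3, false => (((4 : Fin 5), false), ((3 : Fin 5), false))
  | 2, true, 4, true => (((3 : Fin 5), true), ((3 : Fin 5), false))
  | 2, true, 4, false => (((4 : Fin 5), true), ((4 : Fin 5), true))
  | 2, false, 0, true => (((1 : Fin 5), true), ((2 : Fin 5), false))
  | 2, false, 0, false => (((1 : Fin 5), false), ((2 : Fin 5), false))
  | 2, false, 1, true => (((0 : Fin 5), true), ((3 : Fin 5), false))
  | 2, false, 1, false => (((2 : Fin 5), false), ((3 : Fin 5), false))
  | 2, false, 2, true => (((2 : Fin 5), true), ((3 : Fin 5), false))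
  | 2, false, 2, false => (((0 : Fin 5), false), ((3 : Fin 5), false))
  | 2, false, 3, true => (((4 : Fin 5), true), ((3 : Fin 5), true))
  | 2, false, 3, false => (((3 : Fin 5), true), ((1 : Fin 5), false))
  | 2, false, 4, true => (((4 : Fin 5), false), ((4 : Fin 5), false))
  | 2, false, 4, false => (((3 : Fin 5), false), ((3 : Fin 5), true))
  | 3, true, 0, true => (((2 : Fin 5), true), ((2 : Fin 5), true))
  | 3, true, 0, false => (((1 : Fin 5), false), ((2 : Fin 5), true))
  | 3, true, 1, true => (((0 : Fin 5), true), ((3 : Fin 5), true))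
  | 3, true, 1, false => (((0 : Fin 5), false), ((3 : Fin 5), true))
  | 3, true, 2, true => (((1 : Fin 5), true), ((2 : Fin 5), true))
  | 3, true, 2, false => (((2 : Fin 5), false), ((2 : Fin 5), true))
  | 3, true, 3, true => (((3 : Fin 5), false), ((0 : Fin 5), true))
  | 3, true, 3, false => (((4 : Fin 5), false), ((2 : Fin 5), false))
  | 3, true, 4, true => (((3 : Fin 5), true), ((2 : Fin 5), false))
  | 3, true, 4, false => (((4 : Fin 5), true), ((4 : Fin 5), false))
  | 3, false, 0, true => (((1 : Fin 5), true), ((3 : Fin 5), false))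
  | 3, false, 0, false => (((1 : Fin 5), false), ((3 : Fin 5), false))
  | 3, false, 1, true => (((2 : Fin 5), true), ((2 : Fin 5), false))
  | 3, false, 1, false => (((0 : Fin 5), false), ((2 : Fin 5), false))
  | 3, false, 2, true => (((0 : Fin 5), true), ((2 : Fin 5), false))
  | 3, false, 2, false => (((2 : Fin 5), false), ((2 : Fin 5), false))
  | 3, false, 3, true => (((4 : Fin 5), true), ((2 : Fin 5), true))
  | 3, false, 3, false => (((3 : Fin 5), true), ((0 : Fin 5), false))
  | 3, false, 4, true => (((4 : Fin 5), false), ((4 : Fin 5), true))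
  | 3, false, 4, false => (((3 : Fin 5), false), ((2 : Fin 5), true))
  | 4, true, 0, true => (((3 : Fin 5), false), ((4 : Fin 5), false))
  | 4, true, 0, false => (((3 : Fin 5), true), ((4 : Fin 5), false))
  | 4, true, 1, true => (((2 : Fin 5), false), ((4 : Fin 5), true))
  | 4, true, 1, false => (((2 : Fin 5), true), ((4 : Fin 5), true))
  | 4, true, 2, true => (((1 : Fin 5), false), ((4 : Fin 5), true))
  | 4, true, 2, false => (((1 : Fin 5), true), ((4 : Fin 5), true))
  | 4, true, 3, true => (((0 : Fin 5), false), ((4 : Fin 5), false))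
  | 4, true, 3, false => (((0 : Fin 5), true), ((4 : Fin 5), false))
  | 4, true, 4, true => (((4 : Fin 5), false), ((2 : Fin 5), true))
  | 4, true, 4, false => (((4 : Fin 5), true), ((3 : Fin 5), false))
  | 4, false, 0, true => (((3 : Fin 5), false), ((4 : Fin 5), true))
  | 4, false, 0, false => (((3 : Fin 5), true), ((4 : Fin 5), true))
  | 4, false, 1, true => (((2 : Fin 5), false), ((4 : Fin 5), false))
  | 4, false, 1, false => (((2 : Fin 5), true), ((4 : Fin 5), false))
  | 4, false, 2, true => (((1 : Fin 5), false), ((4 : Fin 5), false))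
  | 4, false, 2, false => (((1 : Fin 5), true), ((4 : Fin 5), false))
  | 4, false, 3, true => (((0 : Fin 5), false), ((4 : Fin 5), true))
  | 4, false, 3, false => (((0 : Fin 5), true), ((4 : Fin 5), true))
  | 4, false, 4, true => (((4 : Fin 5), false), ((3 : Fin 5), true))
  | 4, false, 4, false => (((4 : Fin 5), true), ((2 : Fin 5), false))
  | _, _, _, _ => (s, b)

def ruleA : L → L → L × L := fun s a =>
  match s.1.val, s.2, a.1.val, a.2 with
  | 0, true, 0, true => (((0 : Fin 5), true), ((1 : Fin 5), true))
  | 0, true, 0, false => (((1 : Fin 5), false), ((2 : Fin 5), true))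
  | 0, true, 1, true => (((1 : Fin 5), true), ((1 : Fin 5), true))
  | 0, true, 1, false => (((0 : Fin 5), false), ((1 : Fin 5), true))
  | 0, true, 2, true => (((2 : Fin 5), true), ((1 : Fin 5), true))
  | 0, true, 2, false => (((3 : Fin 5), false), ((2 : Fin 5), true))
  | 0, true, 3, true => (((3 : Fin 5), true), ((1 : Fin 5), true))
  | 0, true, 3, false => (((2 : Fin 5), false), ((1 : Fin 5), true))
  | 0, true, 4, true => (((4 : Fin 5), false), ((3 : Fin 5), false))
  | 0, true, 4, false => (((4 : Fin 5), true), ((3 : Fin 5), false))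
  | 0, false, 0, true => (((0 : Fin 5), true), ((1 : Fin 5), false))
  | 0, false, 0, false => (((1 : Fin 5), false), ((1 : Fin 5), false))
  | 0, false, 1, true => (((1 : Fin 5), true), ((1 : Fin 5), false))
  | 0, false, 1, false => (((0 : Fin 5), false), ((2 : Fin 5), false))
  | 0, false, 2, true => (((2 : Fin 5), true), ((1 : Fin 5), false))
  | 0, false, 2, false => (((3 : Fin 5), false), ((1 : Fin 5), false))
  | 0, false, 3, true => (((3 : Fin 5), true), ((1 : Fin 5), false))
  | 0, false, 3, false => (((2 : Fin 5), false), ((2 : Fin 5), false))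
  | 0, false, 4, true => (((4 : Fin 5), false), ((3 : Fin 5), true))
  | 0, false, 4, false => (((4 : Fin 5), true), ((3 : Fin 5), true))
  | 1, true, 0, true => (((1 : Fin 5), true), ((2 : Fin 5), true))
  | 1, true, 0, false => (((0 : Fin 5), false), ((0 : Fin 5), true))
  | 1, true, 1, true => (((0 : Fin 5), true), ((0 : Fin 5), true))
  | 1, true, 1, false => (((1 : Fin 5), false), ((0 : Fin 5), true))
  | 1, true, 2, true => (((3 : Fin 5), true), ((2 : Fin 5), true))
  | 1, true, 2, false => (((2 : Fin 5), false), ((0 : Fin 5), true))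
  | 1, true, 3, true => (((2 : Fin 5), true), ((0 : Fin 5), true))
  | 1, true, 3, false => (((3 : Fin 5), false), ((0 : Fin 5), true))
  | 1, true, 4, true => (((4 : Fin 5), true), ((2 : Fin 5), false))
  | 1, true, 4, false => (((4 : Fin 5), false), ((2 : Fin 5), false))
  | 1, false, 0, true => (((1 : Fin 5), true), ((0 : Fin 5), false))
  | 1, false, 0, false => (((0 : Fin 5), false), ((0 : Fin 5), false))
  | 1, false, 1, true => (((0 : Fin 5), true), ((2 : Fin 5), false))
  | 1, false, 1, false => (((1 : Fin 5), false), ((0 : Fin 5), false))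
  | 1, false, 2, true => (((3 : Fin 5), true), ((0 : Fin 5), false))
  | 1, false, 2, false => (((2 : Fin 5), false), ((0 : Fin 5), false))
  | 1, false, 3, true => (((2 : Fin 5), true), ((2 : Fin 5), false))
  | 1, false, 3, false => (((3 : Fin 5), false), ((0 : Fin 5), false))
  | 1, false, 4, true => (((4 : Fin 5), true), ((2 : Fin 5), true))
  | 1, false, 4, false => (((4 : Fin 5), false), ((2 : Fin 5), true))
  | 2, true, 0, true => (((1 : Fin 5), true), ((0 : Fin 5), true))
  | 2, true, 0, false => (((1 : Fin 5), false), ((1 : Fin 5), true))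
  | 2, true, 1, true => (((0 : Fin 5), true), ((2 : Fin 5), true))
  | 2, true, 1, false => (((0 : Fin 5), false), ((2 : Fin 5), true))
  | 2, true, 2, true => (((3 : Fin 5), true), ((0 : Fin 5), true))
  | 2, true, 2, false => (((3 : Fin 5), false), ((1 : Fin 5), true))
  | 2, true, 3, true => (((2 : Fin 5), true), ((2 : Fin 5), true))
  | 2, true, 3, false => (((2 : Fin 5), false), ((2 : Fin 5), true))
  | 2, true, 4, true => (((4 : Fin 5), true), ((1 : Fin 5), false))
  | 2, true, 4, false => (((4 : Fin 5), false), ((1 : Fin 5), false))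
  | 2, false, 0, true => (((1 : Fin 5), true), ((2 : Fin 5), false))
  | 2, false, 0, false => (((1 : Fin 5), false), ((2 : Fin 5), false))
  | 2, false, 1, true => (((0 : Fin 5), true), ((0 : Fin 5), false))
  | 2, false, 1, false => (((0 : Fin 5), false), ((1 : Fin 5), false))
  | 2, false, 2, true => (((3 : Fin 5), true), ((2 : Fin 5), false))
  | 2, false, 2, false => (((3 : Fin 5), false), ((2 : Fin 5), false))
  | 2, false, 3, true => (((2 : Fin 5), true), ((0 : Fin 5), false))
  | 2, false, 3, false => (((2 : Fin 5), false), ((1 : Fin 5), false))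
  | 2, false, 4, true => (((4 : Fin 5), true), ((1 : Fin 5), true))
  | 2, false, 4, false => (((4 : Fin 5), false), ((1 : Fin 5), true))
  | 3, true, 0, true => (((0 : Fin 5), false), ((4 : Fin 5), false))
  | 3, true, 0, false => (((3 : Fin 5), false), ((3 : Fin 5), false))
  | 3, true, 1, true => (((1 : Fin 5), false), ((4 : Fin 5), false))
  | 3, true, 1, false => (((2 : Fin 5), false), ((3 : Fin 5), false))
  | 3, true, 2, true => (((1 : Fin 5), true), ((3 : Fin 5), false))
  | 3, true, 2, false => (((3 : Fin 5), true), ((4 : Fin 5), true))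
  | 3, true, 3, true => (((0 : Fin 5), true), ((3 : Fin 5), false))
  | 3, true, 3, false => (((2 : Fin 5), true), ((4 : Fin 5), true))
  | 3, true, 4, true => (((4 : Fin 5), false), ((0 : Fin 5), false))
  | 3, true, 4, false => (((4 : Fin 5), true), ((0 : Fin 5), false))
  | 3, false, 0, true => (((3 : Fin 5), true), ((3 : Fin 5), true))
  | 3, false, 0, false => (((0 : Fin 5), true), ((4 : Fin 5), true))
  | 3, false, 1, true => (((2 : Fin 5), true), ((3 : Fin 5), true))
  | 3, false, 1, false => (((1 : Fin 5), true), ((4 : Fin 5), true))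
  | 3, false, 2, true => (((3 : Fin 5), false), ((4 : Fin 5), false))
  | 3, false, 2, false => (((1 : Fin 5), false), ((3 : Fin 5), true))
  | 3, false, 3, true => (((2 : Fin 5), false), ((4 : Fin 5), false))
  | 3, false, 3, false => (((0 : Fin 5), false), ((3 : Fin 5), true))
  | 3, false, 4, true => (((4 : Fin 5), false), ((0 : Fin 5), true))
  | 3, false, 4, false => (((4 : Fin 5), true), ((0 : Fin 5), true))
  | 4, true, 0, true => (((0 : Fin 5), false), ((3 : Fin 5), false))
  | 4, true, 0, false => (((1 : Fin 5), true), ((4 : Fin 5), false))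
  | 4, true, 1, true => (((1 : Fin 5), false), ((3 : Fin 5), false))
  | 4, true, 1, false => (((0 : Fin 5), true), ((4 : Fin 5), false))
  | 4, true, 2, true => (((3 : Fin 5), false), ((3 : Fin 5), true))
  | 4, true, 2, false => (((4 : Fin 5), false), ((4 : Fin 5), false))
  | 4, true, 3, true => (((2 : Fin 5), false), ((3 : Fin 5), true))
  | 4, true, 3, false => (((4 : Fin 5), true), ((4 : Fin 5), false))
  | 4, true, 4, true => (((2 : Fin 5), true), ((4 : Fin 5), false))
  | 4, true, 4, false => (((3 : Fin 5), true), ((4 : Fin 5), false))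
  | 4, false, 0, true => (((1 : Fin 5), false), ((4 : Fin 5), true))
  | 4, false, 0, false => (((0 : Fin 5), true), ((3 : Fin 5), true))
  | 4, false, 1, true => (((0 : Fin 5), false), ((4 : Fin 5), true))
  | 4, false, 1, false => (((1 : Fin 5), true), ((3 : Fin 5), true))
  | 4, false, 2, true => (((4 : Fin 5), true), ((4 : Fin 5), true))
  | 4, false, 2, false => (((3 : Fin 5), true), ((3 : Fin 5), false))
  | 4, false, 3, true => (((4 : Fin 5), false), ((4 : Fin 5), true))
  | 4, false, 3, false => (((2 : Fin 5), true), ((3 : Fin 5), false))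
  | 4, false, 4, true => (((3 : Fin 5), false), ((4 : Fin 5), true))
  | 4, false, 4, false => (((2 : Fin 5), false), ((4 : Fin 5), true))
  | _, _, _, _ => (s, a)

def Q : List (L × L × L × L) :=
[
  (((4 : Fin 5), true), ((4 : Fin 5), true), ((4 : Fin 5), true), ((4 : Fin 5), true)),
  (((4 : Fin 5), false), ((4 : Fin 5), false), ((4 : Fin 5), false), ((4 : Fin 5), false)),
  (((3 : Fin 5), false), ((2 : Fin 5), true), ((3 : Fin 5), false), ((2 : Fin 5), true)),
  (((2 : Fin 5), true), ((3 : Fin 5), false), ((2 : Fin 5), true), ((3 : Fin 5), false)),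
  (((2 : Fin 5), false), ((3 : Fin 5), true), ((2 : Fin 5), false), ((3 : Fin 5), true)),
  (((3 : Fin 5), true), ((2 : Fin 5), false), ((3 : Fin 5), true), ((2 : Fin 5), false)),
  (((0 : Fin 5), false), ((1 : Fin 5), true), ((0 : Fin 5), false), ((1 : Fin 5), true)),
  (((1 : Fin 5), true), ((0 : Fin 5), false), ((1 : Fin 5), true), ((0 : Fin 5), false)),
  (((1 : Fin 5), false), ((0 : Fin 5), true), ((1 : Fin 5), false), ((0 : Fin 5), true)),
  (((0 : Fin 5), true), ((1 : Fin 5), false), ((0 : Fin 5), true), ((1 : Fin 5), false))]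


lemma hB1 : ∀ s b, ruleB (ruleB s b).2 (linv b) = (linv (ruleB s b).1, s) := by decide
lemma hB2 : ∀ s b, ruleB (linv s) (ruleB s b).1 = (b, linv (ruleB s b).2) := by decide
lemma hA1 : ∀ s b, ruleA (ruleA s b).2 (linv b) = (linv (ruleA s b).1, s) := by decide
lemma hA2 : ∀ s b, ruleA (linv s) (ruleA s b).1 = (b, linv (ruleA s b).2) := by decide


/-- Generator images for the action on the "b-side" tree. -/
def fb : Gen → Equiv.Perm Wrd
  | .a i => autoEquiv ruleB hB1 hB2 (i, true)
  | .b i => lmulEquiv (i, true)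

/-- Generator images for the action on the "a-side" tree. -/
def fa : Gen → Equiv.Perm Wrd
  | .a i => lmulEquiv (i, true)
  | .b i => autoEquiv ruleA hA1 hA2 (i, true)

lemma fb_rels : ∀ r ∈ rels, FreeGroup.lift fb r = 1 := by
  intro r hr
  simp only [rels, Set.mem_insert_iff, Set.mem_singleton_iff] at hr
  rcases hr with rfl|rfl|rfl|rfl|rfl|rfl|rfl|rfl|rfl|rfl|rfl|rfl|rfl|rfl|rfl|rfl|rfl|rfl|rfl|rfl|rfl|rfl|rfl|rfl|rfl <;>
  · simp only [ga, gb, map_mul, map_inv, FreeGroup.lift_apply_of, fb, autoEquiv_inv, lmulEquiv_inv]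
    exact relator_perm ruleB hB1 hB2 _ _ _ _ (by decide)

lemma fa_rels : ∀ r ∈ rels, FreeGroup.lift fa r = 1 := by
  intro r hr
  simp only [rels, Set.mem_insert_iff, Set.mem_singleton_iff] at hr
  rcases hr with rfl|rfl|rfl|rfl|rfl|rfl|rfl|rfl|rfl|rfl|rfl|rfl|rfl|rfl|rfl|rfl|rfl|rfl|rfl|rfl|rfl|rfl|rfl|rfl|rfl <;>
  · simp only [ga, gb, map_mul, map_inv, FreeGroup.lift_apply_of, fa, autoEquiv_inv, lmulEquiv_inv]
    exact relator_perm' ruleA hA1 hA2 _ _ _ _ (by decide)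

/-- The action of Γ on the b-side tree. -/
def ψb : G →* Equiv.Perm Wrd := PresentedGroup.toGroup fb_rels

/-- The action of Γ on the a-side tree. -/
def ψa : G →* Equiv.Perm Wrd := PresentedGroup.toGroup fa_rels

lemma ψb_a (i : Fin 5) : ψb (γa i) = autoEquiv ruleB hB1 hB2 (i, true) :=
  PresentedGroup.toGroup.of fb_rels

lemma ψb_b (i : Fin 5) : ψb (γb i) = lmulEquiv (i, true) :=
  PresentedGroup.toGroup.of fb_rels

lemma ψa_a (i : Fin 5) : ψa (γa i) = lmulEquiv (i, true) :=
  PresentedGroup.toGroup.of fa_rels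

/-- The basepoint: the empty word. -/
def pt : Wrd := ⟨[], Red.nil⟩

lemma pow_four {M : Type*} [Monoid M] (e : M) : e ^ 4 = e * e * e * e := by
  rw [show (4 : ℕ) = 3 + 1 from rfl, pow_succ, show (3 : ℕ) = 2 + 1 from rfl, pow_succ,
    sq]

lemma a5_pow_four_ne_one : (γa 4) ^ 4 ≠ 1 := by
  intro hone
  have hv := congrArg (fun g => ((ψa g) pt).1) hone
  simp only [map_pow, map_one, ψa_a] at hv
  rw [pow_four] at hv
  have hL : (((lmulEquiv ((4 : Fin 5), true) * lmulEquiv ((4 : Fin 5), true) *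
      lmulEquiv ((4 : Fin 5), true) * lmulEquiv ((4 : Fin 5), true))) pt).1 =
      [((4 : Fin 5), true), ((4 : Fin 5), true), ((4 : Fin 5), true), ((4 : Fin 5), true)] := rfl
  rw [hL] at hv
  simp [Equiv.Perm.one_apply, pt] at hv
  exact List.cons_ne_nil _ _ hv

/-- The key step data for the quadruple automaton. -/
def qstep (q : L × L × L × L) (b : L) : L × (L × L × L × L) :=
  let r4 := ruleB q.2.2.2 b
  let r3 := ruleB q.2.2.1 r4.1
  let r2 := ruleB q.2.1 r3.1
  let r1 := ruleB q.1 r2.1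
  (r1.1, (r1.2, r2.2, r3.2, r4.2))

lemma qstep_ok : ∀ q ∈ Q, ∀ b : L, (qstep q b).1 = b ∧ (qstep q b).2 ∈ Q := by decide

lemma quad_aux : ∀ (w : List L) (q : L × L × L × L), q ∈ Q →
    auto ruleB q.1 (auto ruleB q.2.1 (auto ruleB q.2.2.1 (auto ruleB q.2.2.2 w))) = w
  | [], _, _ => rfl
  | b :: w, q, hq => by
    obtain ⟨ho, hm⟩ := qstep_ok q hq b
    show (qstep q b).1 :: auto ruleB (qstep q b).2.1 (auto ruleB (qstep q b).2.2.1
      (auto ruleB (qstep q b).2.2.2.1 (auto ruleB (qstep q b).2.2.2.2 w))) = b :: w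
    rw [ho]
    exact congrArg (b :: ·) (quad_aux w _ hm)

lemma a5_pow_four_acts_trivially : ψb ((γa 4) ^ 4) = 1 := by
  rw [map_pow, ψb_a, pow_four]
  refine Equiv.ext fun w => Subtype.ext ?_
  show auto ruleB _ (auto ruleB _ (auto ruleB _ (auto ruleB _ w.1))) = w.1
  exact quad_aux w.1 (((4 : Fin 5), true), ((4 : Fin 5), true), ((4 : Fin 5), true),
    ((4 : Fin 5), true)) (by decide)

lemma a5_mem : (γa 4) ^ 4 ∈ Λ := by
  have h : φ (γa 4) = fgen (Gen.a 4) := PresentedGroup.toGroup.of fgen_rels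
  refine MonoidHom.mem_ker.mpr ?_
  rw [map_pow, h]
  decide

lemma wit_mem : γb 0 * (γb 1)⁻¹ ∈ Λ := by
  have h0 : φ (γb 0) = fgen (Gen.b 0) := PresentedGroup.toGroup.of fgen_rels
  have h1 : φ (γb 1) = fgen (Gen.b 1) := PresentedGroup.toGroup.of fgen_rels
  refine MonoidHom.mem_ker.mpr ?_
  rw [map_mul, map_inv, h0, h1]
  decide

lemma wit_val : ((ψb (γb 0 * (γb 1)⁻¹)) pt).1 = [((0 : Fin 5), true), ((1 : Fin 5), false)] := by
  rw [map_mul, map_inv, ψb_b, ψb_b, lmulEquiv_inv]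
  rfl

/-- a₅⁴ is a nontrivial element of Λ₃ whose normal closure in Λ₃ is a
nontrivial proper normal subgroup; in particular Λ₃ is not simple. -/
theorem a5_pow_four_normal_closure :
    (γa 4) ^ 4 ≠ 1 ∧
      ∃ h : (γa 4) ^ 4 ∈ Λ,
        Subgroup.normalClosure ({⟨(γa 4) ^ 4, h⟩} : Set ↥Λ) ≠ ⊥ ∧
        Subgroup.normalClosure ({⟨(γa 4) ^ 4, h⟩} : Set ↥Λ) ≠ ⊤ ∧
        ¬ IsSimpleGroup ↥Λ := by
  have hne := a5_pow_four_ne_one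
  have hbot : Subgroup.normalClosure ({⟨(γa 4) ^ 4, a5_mem⟩} : Set ↥Λ) ≠ ⊥ := by
    intro hb
    have hx : (⟨(γa 4) ^ 4, a5_mem⟩ : ↥Λ) ∈
        Subgroup.normalClosure ({⟨(γa 4) ^ 4, a5_mem⟩} : Set ↥Λ) :=
      Subgroup.subset_normalClosure (Set.mem_singleton _)
    rw [hb, Subgroup.mem_bot] at hx
    exact hne (by simpa using congrArg Subtype.val hx)
  have htop : Subgroup.normalClosure ({⟨(γa 4) ^ 4, a5_mem⟩} : Set ↥Λ) ≠ ⊤ := by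
    intro ht
    have hsub : Subgroup.normalClosure ({⟨(γa 4) ^ 4, a5_mem⟩} : Set ↥Λ) ≤
        (ψb.comp Λ.subtype).ker := by
      apply Subgroup.normalClosure_le_normal
      intro x hx
      rw [Set.mem_singleton_iff] at hx
      subst hx
      refine MonoidHom.mem_ker.mpr ?_
      simpa using a5_pow_four_acts_trivially
    have hw : (⟨γb 0 * (γb 1)⁻¹, wit_mem⟩ : ↥Λ) ∈ (ψb.comp Λ.subtype).ker :=
      hsub (ht ▸ Subgroup.mem_top _)
    have hv := congrArg (fun e => (e pt).1) (MonoidHom.mem_ker.mp hw)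
    simp only [MonoidHom.comp_apply] at hv
    rw [show Λ.subtype ⟨γb 0 * (γb 1)⁻¹, wit_mem⟩ = γb 0 * (γb 1)⁻¹ from rfl, wit_val] at hv
    simp [pt] at hv
    exact List.cons_ne_nil _ _ hv
  refine ⟨hne, a5_mem, hbot, htop, fun hS => ?_⟩
  rcases hS.eq_bot_or_eq_top_of_normal
      (Subgroup.normalClosure ({⟨(γa 4) ^ 4, a5_mem⟩} : Set ↥Λ))
      Subgroup.normalClosure_normal with h|h
  · exact hbot h
  · exact htop h
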